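/- Let 0 < ε < π/2 and μ > 0. There exist constants c, C > 0 (depending only on ε, μ) such that for every complex λ ≠ 0 with |arg λ| ≤ π − ε and every A ≥ 0, the complex square root B = √(λ/μ + A²) with Re B > 0 satisfies c(|λ|^{1/2} + A) ≤ Re B ≤ |B| ≤ C(|λ|^{1/2} + A). -/

import Mathlib

open Complex

private lemma aux_le_of_sq {x y : ℝ} (hy : 0 ≤ y) (h : x ^ 2 ≤ y ^ 2) : x ≤ y := by
  nlinarith [sq_nonneg (x - y), sq_nonneg (x + y)]

private lemma key_R_low {k s x y t : ℝ} (hk0 : 0 < k) (hk1 : k < 1) (hs : 0 ≤ s)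
    (ht2 : t ^ 2 = x ^ 2 + y ^ 2) (hx : -(k * t) ≤ x) :
    ((1 - k) / 2) * (t + s) ^ 2 ≤ (x + s) ^ 2 + y ^ 2 := by
  nlinarith [mul_nonneg hk0.le (sq_nonneg (t - s)),
    mul_nonneg (by linarith : (0:ℝ) ≤ 1 - k) (sq_nonneg (t - s)),
    mul_nonneg (mul_nonneg (by norm_num : (0:ℝ) ≤ 2) hs) (by linarith : (0:ℝ) ≤ x + k * t)]

private lemma key_z_sec {k s x y t R : ℝ} (hk0 : 0 < k) (hk1 : k < 1) (hs : 0 ≤ s)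
    (ht0 : 0 ≤ t) (ht2 : t ^ 2 = x ^ 2 + y ^ 2) (hx : -(k * t) ≤ x)
    (hR0 : 0 ≤ R) (hR2 : R ^ 2 = (x + s) ^ 2 + y ^ 2) : -(k * R) ≤ x + s := by
  rcases le_or_gt 0 (x + s) with h | h
  · have := mul_nonneg hk0.le hR0; linarith
  · have hxneg : x < 0 := by linarith
    have h1 : x ^ 2 ≤ k ^ 2 * t ^ 2 := by
      nlinarith [mul_nonneg (by linarith : (0:ℝ) ≤ k * t + x) (by linarith : (0:ℝ) ≤ k * t - x)]
    have h2 : (x + s) ^ 2 ≤ x ^ 2 := by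
      nlinarith [mul_nonneg hs (by linarith : (0:ℝ) ≤ -(2 * x + s))]
    have hkk : (0:ℝ) ≤ 1 - k ^ 2 := by nlinarith
    have ht2' : k ^ 2 * t ^ 2 = k ^ 2 * x ^ 2 + k ^ 2 * y ^ 2 := by rw [ht2]; ring
    have h3 : (x + s) ^ 2 ≤ k ^ 2 * R ^ 2 := by
      nlinarith [mul_le_mul_of_nonneg_left h2 hkk, ht2', h1, hR2, sq_nonneg k]
    have h4 := aux_le_of_sq (mul_nonneg hk0.le hR0)
      (show (-(x + s)) ^ 2 ≤ (k * R) ^ 2 by nlinarith [h3])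
    linarith

/-- Let `0 < ε < π/2`, `μ > 0`. There exist `c, C > 0` such that for every `λ ≠ 0` with
`|arg λ| ≤ π - ε` and every `A ≥ 0`, the principal square root `B = (λ/μ + A²)^{1/2}`
(which has `Re B > 0`) satisfies `c(|λ|^{1/2} + A) ≤ Re B ≤ |B| ≤ C(|λ|^{1/2} + A)`. -/
theorem resolvent_root_two_sided_estimate (ε μ : ℝ) (hε : 0 < ε) (hε' : ε < Real.pi / 2)
    (hμ : 0 < μ) :
    ∃ c C : ℝ, 0 < c ∧ 0 < C ∧
      ∀ (l : ℂ) (A : ℝ), l ≠ 0 → |l.arg| ≤ Real.pi - ε → 0 ≤ A →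
        ∀ B : ℂ, B = (l / (μ : ℂ) + (A : ℂ) ^ 2) ^ ((1 : ℂ) / 2) →
          c * (‖l‖ ^ ((1 : ℝ) / 2) + A) ≤ B.re ∧
          B.re ≤ ‖B‖ ∧
          ‖B‖ ≤ C * (‖l‖ ^ ((1 : ℝ) / 2) + A) := by
  have hπ := Real.pi_pos
  set k := Real.cos ε with hkdef
  have hk0 : 0 < k := Real.cos_pos_of_mem_Ioo ⟨by linarith, hε'⟩
  have hk1 : k < 1 := by
    have := Real.cos_lt_cos_of_nonneg_of_le_pi (le_refl 0) (by linarith) hε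
    simpa using this
  set a := Real.sqrt ((1 - k) / 2) with hadef
  have ha0 : 0 < a := Real.sqrt_pos.mpr (by linarith)
  have ha2 : a ^ 2 = (1 - k) / 2 := Real.sq_sqrt (by linarith)
  set m := min (1 / μ) 1 with hmdef
  have hm0 : 0 < m := lt_min (by positivity) one_pos
  have hm1 : m ≤ 1 := min_le_right _ _
  have hm2 : m ≤ 1 / μ := min_le_left _ _
  set M := max (1 / μ) 1 with hMdef
  have hM0 : 0 < M := lt_of_lt_of_le one_pos (le_max_right _ _)
  have hM1 : 1 ≤ M := le_max_right _ _
  have hM2 : 1 / μ ≤ M := le_max_left _ _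
  have hcpos : (0:ℝ) < (1 - k) * a * m / 4 :=
    div_pos (mul_pos (mul_pos (by linarith) ha0) hm0) (by norm_num)
  refine ⟨Real.sqrt ((1 - k) * a * m / 4), Real.sqrt M, Real.sqrt_pos.mpr hcpos,
    Real.sqrt_pos.mpr hM0, ?_⟩
  intro l A hl harg hA B hB
  set z : ℂ := l / (μ : ℂ) + (A : ℂ) ^ 2 with hzdef
  set r := ‖l‖ with hrdef
  have hr0 : 0 < r := norm_pos_iff.mpr hl
  have hzre : z.re = l.re / μ + A ^ 2 := by
    simp [hzdef, pow_two, Complex.add_re, Complex.mul_re]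
  have hzim : z.im = l.im / μ := by
    simp [hzdef, pow_two, Complex.add_im, Complex.mul_im]
  -- sector condition on l
  have hsec : -(k * r) ≤ l.re := by
    have h1 : Real.cos (Real.pi - ε) ≤ Real.cos |l.arg| :=
      Real.cos_le_cos_of_nonneg_of_le_pi (abs_nonneg _) (by linarith) harg
    rw [Real.cos_abs, Real.cos_pi_sub] at h1
    have h2 : r * Real.cos l.arg = l.re := Complex.norm_mul_cos_arg l
    have h3 : -(k * r) ≤ r * Real.cos l.arg := by
      rw [show -(k * r) = r * (-k) by ring]
      exact mul_le_mul_of_nonneg_left h1 hr0.le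
    rw [h2] at h3; exact h3
  -- z ≠ 0
  have hz0 : z ≠ 0 := by
    intro h
    have him : l.im = 0 := by
      have h1 : z.im = 0 := by rw [h]; simp
      rw [hzim] at h1
      exact (div_eq_zero_iff.mp h1).resolve_right hμ.ne'
    have hre : l.re / μ + A ^ 2 = 0 := by
      have h1 : z.re = 0 := by rw [h]; simp
      rwa [hzre] at h1
    have hreval : l.re = -(A ^ 2 * μ) := by
      field_simp at hre; linarith
    have hreneg : l.re < 0 := by
      rcases lt_or_ge l.re 0 with h' | h'
      · exact h'
      · exfalso
        have hA2 : A ^ 2 * μ = 0 := le_antisymm (by linarith) (by positivity)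
        have hre0 : l.re = 0 := by rw [hreval, hA2]; ring
        exact hl (Complex.ext hre0 him)
    have harg' : l.arg = Real.pi := Complex.arg_eq_pi_iff.mpr ⟨hreneg, him⟩
    rw [harg', abs_of_pos hπ] at harg
    linarith
  set R := ‖z‖ with hRdef
  have hR0 : 0 < R := norm_pos_iff.mpr hz0
  have hRsq : R ^ 2 = z.re ^ 2 + z.im ^ 2 := by
    rw [hRdef, Complex.sq_norm, Complex.normSq_apply]; ring
  have hrsq : r ^ 2 = l.re ^ 2 + l.im ^ 2 := by
    rw [hrdef, Complex.sq_norm, Complex.normSq_apply]; ring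
  have hsec' : -(k * (r / μ)) ≤ l.re / μ := by
    rw [show -(k * (r / μ)) = -(k * r) / μ by ring]
    gcongr
  have hrr' : (r / μ) ^ 2 = (l.re / μ) ^ 2 + (l.im / μ) ^ 2 := by
    rw [div_pow, div_pow, div_pow, hrsq]; ring
  have hR2' : R ^ 2 = (l.re / μ + A ^ 2) ^ 2 + (l.im / μ) ^ 2 := by
    rw [hRsq, hzre, hzim]
  -- lower bound on R
  have hRlow : a * (r / μ + A ^ 2) ≤ R := by
    have key := key_R_low hk0 hk1 (sq_nonneg A) hrr' hsec'
    apply aux_le_of_sq hR0.le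
    rw [mul_pow, ha2, hR2']
    exact key
  -- sector condition on z
  have hzsec : -(k * R) ≤ z.re := by
    rw [hzre]
    exact key_z_sec hk0 hk1 (sq_nonneg A) (by positivity) hrr' hsec' hR0.le hR2'
  -- B squared equals z
  have hB2 : B ^ 2 = z := by
    rw [hB, show ((1:ℂ)/2) = (((2:ℕ)):ℂ)⁻¹ by norm_num]
    exact Complex.cpow_nat_inv_pow z two_ne_zero
  -- Re B ≥ 0
  have hBre0 : 0 ≤ B.re := by
    rw [hB, Complex.cpow_def_of_ne_zero hz0, Complex.exp_re]
    have hIm : (Complex.log z * ((1:ℂ)/2)).im = z.arg / 2 := by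
      simp [Complex.mul_im, Complex.log_im]
      ring
    rw [hIm]
    have hcos : 0 ≤ Real.cos (z.arg / 2) := by
      apply Real.cos_nonneg_of_mem_Icc
      constructor
      · have := Complex.neg_pi_lt_arg z; linarith
      · have := Complex.arg_le_pi z; linarith
    positivity
  -- |B|² = R
  have hBabs : ‖B‖ ^ 2 = R := by rw [← norm_pow, hB2]
  -- 2 (Re B)² = R + Re z
  have hBsum : 2 * B.re ^ 2 = R + z.re := by
    have h1 : B.re ^ 2 - B.im ^ 2 = z.re := by
      have := congrArg Complex.re hB2
      simp [pow_two, Complex.mul_re] at this ⊢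
      linarith [this]
    have h2 : B.re ^ 2 + B.im ^ 2 = R := by
      rw [← hBabs, Complex.sq_norm, Complex.normSq_apply]; ring
    linarith
  -- rewrite rpow as sqrt
  have hrpow : ‖l‖ ^ ((1:ℝ)/2) = Real.sqrt r := (Real.sqrt_eq_rpow r).symm
  rw [hrpow]
  set X := Real.sqrt r + A with hXdef
  have hsr : Real.sqrt r ^ 2 = r := Real.sq_sqrt hr0.le
  have hsrn : 0 ≤ Real.sqrt r := Real.sqrt_nonneg r
  have hX0 : 0 ≤ X := by positivity
  have hXsq : X ^ 2 = r + 2 * (Real.sqrt r * A) + A ^ 2 := by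
    have e : X ^ 2 = Real.sqrt r ^ 2 + 2 * (Real.sqrt r * A) + A ^ 2 := by rw [hXdef]; ring
    rw [e, hsr]
  have hX1 : r + A ^ 2 ≤ X ^ 2 := by
    have := mul_nonneg hsrn hA; linarith [hXsq]
  have hX2 : X ^ 2 ≤ 2 * (r + A ^ 2) := by
    have e : (Real.sqrt r - A) ^ 2 = Real.sqrt r ^ 2 - 2 * (Real.sqrt r * A) + A ^ 2 := by ring
    have h := sq_nonneg (Real.sqrt r - A)
    rw [e, hsr] at h
    linarith [hXsq]
  refine ⟨?_, Complex.re_le_norm B, ?_⟩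
  · -- lower bound
    have h1 : (1 - k) * R ≤ 2 * B.re ^ 2 := by
      have e : (1 - k) * R = R - k * R := by ring
      linarith
    have h2 : m * (r + A ^ 2) ≤ r / μ + A ^ 2 := by
      have t1 : m * r ≤ (1 / μ) * r := mul_le_mul_of_nonneg_right hm2 hr0.le
      have t2 : m * A ^ 2 ≤ 1 * A ^ 2 := mul_le_mul_of_nonneg_right hm1 (sq_nonneg A)
      have e1 : m * (r + A ^ 2) = m * r + m * A ^ 2 := by ring
      have e2 : (1 / μ) * r = r / μ := by ring
      linarith
    have s1 : m * (X ^ 2 / 2) ≤ m * (r + A ^ 2) :=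
      mul_le_mul_of_nonneg_left (by linarith) hm0.le
    have s1' : (1 - k) * (a * (m * (X ^ 2 / 2))) ≤ (1 - k) * (a * (m * (r + A ^ 2))) :=
      mul_le_mul_of_nonneg_left (mul_le_mul_of_nonneg_left s1 ha0.le) (by linarith)
    have s2 : a * (m * (r + A ^ 2)) ≤ a * (r / μ + A ^ 2) :=
      mul_le_mul_of_nonneg_left h2 ha0.le
    have s3 : (1 - k) * (a * (m * (r + A ^ 2))) ≤ (1 - k) * R :=
      mul_le_mul_of_nonneg_left (le_trans s2 hRlow) (by linarith)
    have hmain : ((1 - k) * a * m / 4) * X ^ 2 ≤ B.re ^ 2 := by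
      have e : ((1 - k) * a * m / 4) * X ^ 2 = (1 - k) * (a * (m * (X ^ 2 / 2))) / 2 := by ring
      rw [e]; linarith
    apply aux_le_of_sq hBre0
    rw [mul_pow, Real.sq_sqrt hcpos.le]
    exact hmain
  · -- upper bound
    have htri : R ≤ r / μ + A ^ 2 := by
      rw [hRdef, hzdef]
      calc ‖l / (μ:ℂ) + (A:ℂ) ^ 2‖
          ≤ ‖l / (μ:ℂ)‖ + ‖(A:ℂ) ^ 2‖ := norm_add_le _ _
        _ = r / μ + A ^ 2 := by
            rw [norm_div, norm_pow, Complex.norm_real, Complex.norm_real, Real.norm_eq_abs,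
              Real.norm_eq_abs,
              _root_.abs_of_pos hμ, _root_.abs_of_nonneg hA]
    have h4 : r / μ + A ^ 2 ≤ M * (r + A ^ 2) := by
      have t1 : (1 / μ) * r ≤ M * r := mul_le_mul_of_nonneg_right hM2 hr0.le
      have t2 : 1 * A ^ 2 ≤ M * A ^ 2 := mul_le_mul_of_nonneg_right hM1 (sq_nonneg A)
      have e1 : M * (r + A ^ 2) = M * r + M * A ^ 2 := by ring
      have e2 : (1 / μ) * r = r / μ := by ring
      linarith
    have h5 : M * (r + A ^ 2) ≤ M * X ^ 2 := mul_le_mul_of_nonneg_left hX1 hM0.le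
    apply aux_le_of_sq (by positivity)
    rw [mul_pow, Real.sq_sqrt hM0.le, hBabs]
    linarith
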